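/- Let N ≥ 1 and d ≥ 0 and let y be an indeterminate. Define c_d(χ) = Σ_{k=0}^{d} C(-χ + d(N+1), k) (-y)^k / (1-y)^{d(N+1)} ∈ ℚ(y) for any integer χ. Then the generating functions W_χ(q) = Σ_d c_d(χ) q^d satisfy the multiplicativity: W_{χ+N}(q) = W_χ(q) · B(q)^N in ℚ(y)[[q]], where B(q) = f(qy/(1-y)^{N+1}) and f is the unique power series with f(0)=1 solving f^N - f^{N+1} + z = 0. -/

import Mathlib

/- STATEMENT 19: With `c_d(χ) = Σ_{k=0}^d C(-χ+d(N+1), k) (-y)^k / (1-y)^(d(N+1))`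
in `ℚ(y)` and `W_χ(q) = Σ_d c_d(χ) q^d`, one has `W_{χ+N} = W_χ ⬝ B^N` where
`B(q) = f(qy/(1-y)^(N+1))` and `f ∈ ℚ[[z]]` is the unique series with `f(0) = 1`
solving `f^N - f^(N+1) + z = 0`. -/

/-- Generalized binomial coefficient `C(a,k)` in `ℚ(y)`. -/
noncomputable def gchoose (a : ℤ) (k : ℕ) : RatFunc ℚ :=
  (∏ i ∈ Finset.range k, ((a : RatFunc ℚ) - (i : RatFunc ℚ))) / (k.factorial : RatFunc ℚ)

/-- `c_d(χ) = Σ_{k=0}^d C(-χ+d(N+1), k) (-y)^k / (1-y)^(d(N+1))`. -/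
noncomputable def cCoeff (N : ℕ) (χ : ℤ) (d : ℕ) : RatFunc ℚ :=
  ∑ k ∈ Finset.range (d + 1),
    gchoose (-χ + d * ((N : ℤ) + 1)) k * (-(RatFunc.X : RatFunc ℚ)) ^ k /
      (1 - RatFunc.X : RatFunc ℚ) ^ (d * (N + 1))

/-- `W_χ(q) = Σ_d c_d(χ) q^d ∈ ℚ(y)[[q]]`. -/
noncomputable def Wseries (N : ℕ) (χ : ℤ) : PowerSeries (RatFunc ℚ) :=
  PowerSeries.mk fun d => cCoeff N χ d

/-- `B(q) = f(qy/(1-y)^(N+1))`, i.e. `f` rescaled by `y/(1-y)^(N+1)`. -/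
noncomputable def Bseries (N : ℕ) (f : PowerSeries ℚ) : PowerSeries (RatFunc ℚ) :=
  PowerSeries.rescale ((RatFunc.X : RatFunc ℚ) / (1 - RatFunc.X) ^ (N + 1))
    (PowerSeries.map (RatFunc.C : ℚ →+* RatFunc ℚ) f)

instance : CharZero (RatFunc ℚ) :=
  charZero_of_injective_algebraMap (algebraMap ℚ (RatFunc ℚ)).injective


lemma gchoose_zero (a : ℤ) : gchoose a 0 = 1 := by simp [gchoose]

lemma gchoose_pascal (a : ℤ) (k : ℕ) :
    gchoose a (k + 1) = gchoose (a - 1) (k + 1) + gchoose (a - 1) k := by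
  have hQ : ∀ j : ℕ, (∏ i ∈ Finset.range j, (((a : RatFunc ℚ) - 1) - (i : RatFunc ℚ)))
      = ∏ i ∈ Finset.range j, ((a : RatFunc ℚ) - ((i + 1 : ℕ) : RatFunc ℚ)) := by
    intro j
    apply Finset.prod_congr rfl
    intro i _
    push_cast
    ring
  set Q : RatFunc ℚ := ∏ i ∈ Finset.range k, (((a : RatFunc ℚ) - 1) - (i : RatFunc ℚ)) with hQdef
  have h1 : (∏ i ∈ Finset.range (k + 1), ((a : RatFunc ℚ) - (i : RatFunc ℚ))) = (a : RatFunc ℚ) * Q := by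
    rw [Finset.prod_range_succ' (fun i => ((a : RatFunc ℚ) - (i : RatFunc ℚ)))]
    rw [hQdef, hQ]
    simp [mul_comm]
  have h2 : (∏ i ∈ Finset.range (k + 1), (((a : RatFunc ℚ) - 1) - (i : RatFunc ℚ)))
      = Q * (((a : RatFunc ℚ) - 1) - (k : RatFunc ℚ)) := Finset.prod_range_succ _ k
  have hfac : ((k + 1).factorial : RatFunc ℚ) = ((k + 1 : ℕ) : RatFunc ℚ) * (k.factorial : RatFunc ℚ) := by
    rw [Nat.factorial_succ]; push_cast; ring
  have hk0 : (k.factorial : RatFunc ℚ) ≠ 0 := by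
    exact_mod_cast Nat.cast_ne_zero.mpr (Nat.factorial_ne_zero k)
  have hk1 : ((k+1).factorial : RatFunc ℚ) ≠ 0 := by
    exact_mod_cast Nat.cast_ne_zero.mpr (Nat.factorial_ne_zero (k+1))
  unfold gchoose
  push_cast [Int.cast_sub]
  rw [h1, h2, hfac, ← hQdef]
  have hkk : ((k : RatFunc ℚ) + 1) ≠ 0 := by
    have : (((k + 1 : ℕ)) : RatFunc ℚ) ≠ 0 := Nat.cast_ne_zero.mpr (Nat.succ_ne_zero k)
    push_cast at this
    exact this
  push_cast
  field_simp
  ring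

lemma cCoeff_zero (N : ℕ) (χ : ℤ) : cCoeff N χ 0 = 1 := by
  simp [cCoeff, gchoose_zero]

lemma one_sub_X_ne_zero : (1 - RatFunc.X : RatFunc ℚ) ≠ 0 := by
  intro h
  have : (RatFunc.X : RatFunc ℚ) = 1 := by linear_combination -h
  have h2 := congrArg (RatFunc.eval (RingHom.id ℚ) 0) this
  simp [RatFunc.eval_X, RatFunc.eval_one] at h2

lemma cCoeff_rec (N : ℕ) (χ : ℤ) (d : ℕ) :
    cCoeff N (χ + 1) (d + 1)
      = cCoeff N χ (d + 1)
        + (RatFunc.X / (1 - RatFunc.X) ^ (N + 1)) * cCoeff N (χ - N) d := by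
  have h1X : (1 - RatFunc.X : RatFunc ℚ) ≠ 0 := one_sub_X_ne_zero
  set a : ℤ := -χ + (d + 1 : ℕ) * ((N : ℤ) + 1) with ha
  have e1 : -(χ + 1) + ((d + 1 : ℕ) : ℤ) * ((N : ℤ) + 1) = a - 1 := by
    rw [ha]; push_cast; ring
  have e2 : -(χ - N) + (d : ℤ) * ((N : ℤ) + 1) = a - 1 := by
    rw [ha]; push_cast; ring
  unfold cCoeff
  rw [e1, e2]
  rw [← Finset.sum_div, ← Finset.sum_div, ← Finset.sum_div]
  have key : (∑ k ∈ Finset.range (d + 1 + 1), gchoose (a - 1) k * (-RatFunc.X : RatFunc ℚ) ^ k)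
      = (∑ k ∈ Finset.range (d + 1 + 1), gchoose a k * (-RatFunc.X : RatFunc ℚ) ^ k)
        + RatFunc.X * ∑ k ∈ Finset.range (d + 1), gchoose (a - 1) k * (-RatFunc.X : RatFunc ℚ) ^ k := by
    rw [Finset.sum_range_succ' (fun k => gchoose (a - 1) k * (-RatFunc.X : RatFunc ℚ) ^ k),
        Finset.sum_range_succ' (fun k => gchoose a k * (-RatFunc.X : RatFunc ℚ) ^ k),
        Finset.mul_sum]
    have hterm : ∀ j : ℕ, gchoose (a - 1) (j + 1) * (-RatFunc.X : RatFunc ℚ) ^ (j + 1)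
        = gchoose a (j + 1) * (-RatFunc.X : RatFunc ℚ) ^ (j + 1)
          + RatFunc.X * (gchoose (a - 1) j * (-RatFunc.X : RatFunc ℚ) ^ j) := by
      intro j
      rw [gchoose_pascal a j, pow_succ]
      ring
    rw [Finset.sum_congr rfl (fun j _ => hterm j), Finset.sum_add_distrib]
    simp [gchoose_zero]
    ring
  rw [key]
  have hpow : ((1 : RatFunc ℚ) - RatFunc.X) ^ ((d + 1) * (N + 1))
      = (1 - RatFunc.X : RatFunc ℚ) ^ (d * (N + 1)) * (1 - RatFunc.X : RatFunc ℚ) ^ (N + 1) := by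
    rw [← pow_add]; ring_nf
  rw [hpow, add_div]
  congr 1
  have hd : (1 - RatFunc.X : RatFunc ℚ) ^ (d * (N + 1)) ≠ 0 := pow_ne_zero _ h1X
  have hn : (1 - RatFunc.X : RatFunc ℚ) ^ (N + 1) ≠ 0 := pow_ne_zero _ h1X
  field_simp

open PowerSeries

noncomputable def tscale (N : ℕ) : RatFunc ℚ :=
  RatFunc.X / (1 - RatFunc.X) ^ (N + 1)

lemma Wseries_rec (N : ℕ) (χ : ℤ) :
    Wseries N (χ + 1)
      = Wseries N χ + C (R := RatFunc ℚ) (tscale N) * (X * Wseries N (χ - N)) := by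
  ext d
  rw [map_add, coeff_C_mul]
  cases d with
  | zero =>
      simp [Wseries, cCoeff_zero]
  | succ n =>
      rw [coeff_succ_X_mul]
      simp only [Wseries, coeff_mk]
      exact cCoeff_rec N χ n

lemma Wseries_const (N : ℕ) (χ : ℤ) :
    constantCoeff (R := RatFunc ℚ) (Wseries N χ) = 1 := by
  simp [Wseries, cCoeff_zero]

lemma Wseries_ne_zero (N : ℕ) (χ : ℤ) : Wseries N χ ≠ 0 := fun h => by
  have := Wseries_const N χ
  rw [h, map_zero] at this
  exact zero_ne_one this

noncomputable def Aseries (N : ℕ) : PowerSeries (RatFunc ℚ) :=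
  (Wseries N 0)⁻¹ * Wseries N 1

lemma Aseries_const (N : ℕ) : constantCoeff (R := RatFunc ℚ) (Aseries N) = 1 := by
  rw [Aseries, map_mul, PowerSeries.constantCoeff_inv, Wseries_const, Wseries_const]
  norm_num

lemma W_mul_inv (N : ℕ) : Wseries N 0 * (Wseries N 0)⁻¹ = 1 :=
  PowerSeries.mul_inv_cancel _ (by rw [Wseries_const]; exact one_ne_zero)

lemma Wseries_step (N : ℕ) (χ : ℤ) :
    Wseries N (χ + 1) = Wseries N χ * Aseries N := by
  set G : ℤ → PowerSeries (RatFunc ℚ) :=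
    fun χ => Wseries N (χ + 1) - Wseries N χ * Aseries N with hG
  have hG0 : G 0 = 0 := by
    rw [hG]
    simp only
    rw [Aseries, ← mul_assoc, W_mul_inv, one_mul, zero_add, sub_self]
  have hGrec : ∀ ψ : ℤ, G (ψ + 1)
      = G ψ + C (R := RatFunc ℚ) (tscale N) * (X * G (ψ - N)) := by
    intro ψ
    rw [hG]
    simp only
    have e1 : (ψ + 1 + 1 : ℤ) = (ψ + 1) + 1 := by ring
    rw [e1, Wseries_rec N (ψ + 1), Wseries_rec N ψ]
    have e2 : (ψ + 1 - (N : ℤ)) = (ψ - N) + 1 := by ring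
    rw [e2, Wseries_rec N (ψ - N)]
    ring
  suffices h : ∀ d : ℕ, ∀ ψ : ℤ, coeff (R := RatFunc ℚ) d (G ψ) = 0 by
    have : G χ = 0 := PowerSeries.ext fun d => by rw [h d χ, map_zero]
    rw [hG] at this
    simp only at this
    linear_combination (norm := ring_nf) this
  intro d
  induction d with
  | zero =>
      intro ψ
      rw [hG]
      simp only [coeff_zero_eq_constantCoeff, map_sub, map_mul,
        Wseries_const, Aseries_const]
      norm_num
  | succ n ih =>
      have hshift : ∀ ψ : ℤ, coeff (R := RatFunc ℚ) (n + 1) (G (ψ + 1))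
          = coeff (R := RatFunc ℚ) (n + 1) (G ψ) := by
        intro ψ
        rw [hGrec ψ, map_add, coeff_C_mul, coeff_succ_X_mul, ih (ψ - N),
          mul_zero, add_zero]
      intro ψ
      have hconst : ∀ ψ : ℤ, coeff (R := RatFunc ℚ) (n + 1) (G ψ)
          = coeff (R := RatFunc ℚ) (n + 1) (G 0) := by
        intro ψ
        induction ψ using Int.induction_on with
        | zero => rfl
        | succ i hi => rw [hshift i, hi]
        | pred i hi =>
            have := hshift (-(i : ℤ) - 1)
            rw [show (-(i : ℤ) - 1 + 1) = -(i : ℤ) by ring] at this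
            rw [← this, hi]
      rw [hconst ψ, hG0, map_zero]

lemma Wseries_pow (N : ℕ) (χ : ℤ) (k : ℕ) :
    Wseries N (χ + k) = Wseries N χ * (Aseries N) ^ k := by
  induction k with
  | zero => simp
  | succ m ih =>
      have e : (χ + ((m : ℤ) + 1)) = (χ + m) + 1 := by ring
      push_cast
      rw [e, Wseries_step, ih, pow_succ, mul_assoc]

lemma Aseries_eq (N : ℕ) : (Aseries N) ^ (N + 1)
    = (Aseries N) ^ N + C (R := RatFunc ℚ) (tscale N) * X := by
  have h1 : Wseries N ((0 : ℤ) + (N + 1 : ℕ)) = Wseries N 0 * (Aseries N) ^ (N + 1) :=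
    Wseries_pow N 0 (N + 1)
  have h2 : Wseries N ((0 : ℤ) + (N : ℕ)) = Wseries N 0 * (Aseries N) ^ N :=
    Wseries_pow N 0 N
  have h3 := Wseries_rec N (N : ℤ)
  rw [show ((N : ℤ) - N) = 0 by ring] at h3
  have e1 : ((N : ℤ) + 1) = (0 : ℤ) + ((N + 1 : ℕ) : ℤ) := by push_cast; ring
  have e2 : ((N : ℤ)) = (0 : ℤ) + ((N : ℕ) : ℤ) := by push_cast; ring
  rw [e1, e2, h1, h2] at h3
  have := Wseries_ne_zero N 0
  apply mul_left_cancel₀ this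
  rw [h3]
  ring

lemma Bseries_const (N : ℕ) (f : PowerSeries ℚ)
    (hf0 : PowerSeries.constantCoeff (R := ℚ) f = 1) :
    constantCoeff (R := RatFunc ℚ) (Bseries N f) = 1 := by
  rw [Bseries, ← coeff_zero_eq_constantCoeff, coeff_rescale, pow_zero, one_mul,
    coeff_map, coeff_zero_eq_constantCoeff, hf0, map_one]

lemma Bseries_eq (N : ℕ) (f : PowerSeries ℚ)
    (hf : f ^ N - f ^ (N + 1) + PowerSeries.X = 0) :
    (Bseries N f) ^ (N + 1) = (Bseries N f) ^ N + C (R := RatFunc ℚ) (tscale N) * X := by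
  have h1 : f ^ (N + 1) = f ^ N + PowerSeries.X := by linear_combination -hf
  have h2 := congrArg (PowerSeries.map (RatFunc.C : ℚ →+* RatFunc ℚ)) h1
  simp only [map_pow, map_add, PowerSeries.map_X] at h2
  have h3 := congrArg (PowerSeries.rescale (tscale N)) h2
  simp only [map_pow, map_add, PowerSeries.rescale_X] at h3
  exact h3

lemma unique_sol (N : ℕ) (A B : PowerSeries (RatFunc ℚ))
    (hA0 : constantCoeff (R := RatFunc ℚ) A = 1) (hB0 : constantCoeff (R := RatFunc ℚ) B = 1)
    (hA : A ^ (N + 1) = A ^ N + C (R := RatFunc ℚ) (tscale N) * X)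
    (hB : B ^ (N + 1) = B ^ N + C (R := RatFunc ℚ) (tscale N) * X) :
    A = B := by
  have h1 := geom_sum₂_mul A B (N + 1)
  have h2 := geom_sum₂_mul A B N
  have hzero : ((∑ i ∈ Finset.range (N + 1), A ^ i * B ^ (N + 1 - 1 - i))
      - ∑ i ∈ Finset.range N, A ^ i * B ^ (N - 1 - i)) * (A - B) = 0 := by
    rw [sub_mul, h1, h2, hA, hB]
    ring
  have hc : constantCoeff (R := RatFunc ℚ)
      ((∑ i ∈ Finset.range (N + 1), A ^ i * B ^ (N + 1 - 1 - i))
        - ∑ i ∈ Finset.range N, A ^ i * B ^ (N - 1 - i)) = 1 := by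
    rw [map_sub, map_sum, map_sum]
    have e1 : ∀ n : ℕ, ∀ i ∈ Finset.range n,
        constantCoeff (R := RatFunc ℚ) (A ^ i * B ^ (n - 1 - i)) = 1 := by
      intro n i _
      rw [map_mul, map_pow, map_pow, hA0, hB0, one_pow, one_pow, one_mul]
    rw [Finset.sum_congr rfl (e1 (N + 1)), Finset.sum_congr rfl (e1 N)]
    simp
  have hne : ((∑ i ∈ Finset.range (N + 1), A ^ i * B ^ (N + 1 - 1 - i))
      - ∑ i ∈ Finset.range N, A ^ i * B ^ (N - 1 - i)) ≠ 0 := fun h => by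
    rw [h, map_zero] at hc
    exact zero_ne_one hc
  have := mul_eq_zero.mp hzero
  rcases this with h | h
  · exact absurd h hne
  · exact sub_eq_zero.mp h

theorem W_multiplicativity (N : ℕ) (hN : 1 ≤ N) (f : PowerSeries ℚ)
    (hf0 : PowerSeries.constantCoeff (R := ℚ) f = 1)
    (hf : f ^ N - f ^ (N + 1) + PowerSeries.X = 0) (χ : ℤ) :
    Wseries N (χ + N) = Wseries N χ * (Bseries N f) ^ N := by
  have hAB : Aseries N = Bseries N f :=
    unique_sol N _ _ (Aseries_const N) (Bseries_const N f hf0)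
      (Aseries_eq N) (Bseries_eq N f hf)
  rw [Wseries_pow N χ N, hAB]
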